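/- arXiv:1301.5447 — 2 statements merged into one kernel-verified Lean document; each statement's English description precedes it below -/
import Mathlib

section
/- Let γ > 0 and b > 0. For every f ∈ C([0,∞]) and every t > 0, the function P_t^{γ,b} f is continuously differentiable on [0,∞) and for every x ≥ 0 one has √x · | (P_t^{γ,b} f)'(x) | ≤ (2√2 / √(γ t)) · ‖f‖_∞. -/
open MeasureTheory


/- ### Auxiliary series lemmas -/

lemma exp_tsum (u : ℝ) : ∑' m : ℕ, u ^ m / m.factorial = Real.exp u := by
  rw [Real.exp_eq_exp_ℝ, NormedSpace.exp_eq_tsum_div]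

lemma summable0 (u : ℝ) : Summable (fun m : ℕ => u ^ m / m.factorial) :=
  Real.summable_pow_div_factorial u

lemma summable1 {u : ℝ} (hu : 0 ≤ u) :
    Summable (fun m : ℕ => (m : ℝ) * u ^ m / m.factorial) := by
  apply Summable.of_nonneg_of_le (fun m => by positivity)
    (fun m => ?_) (summable0 (2 * u))
  have h1 : (m : ℝ) ≤ 2 ^ m := by exact_mod_cast (Nat.lt_two_pow_self (n := m)).le
  have h2 : (2 * u) ^ m = 2 ^ m * u ^ m := mul_pow 2 u m
  rw [h2]
  gcongr

lemma summable2 {u : ℝ} (hu : 0 ≤ u) :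
    Summable (fun m : ℕ => (m : ℝ) ^ 2 * u ^ m / m.factorial) := by
  apply Summable.of_nonneg_of_le (fun m => by positivity)
    (fun m => ?_) (summable0 (4 * u))
  have h1 : (m : ℝ) ≤ 2 ^ m := by exact_mod_cast (Nat.lt_two_pow_self (n := m)).le
  have h2 : (4 * u) ^ m = 4 ^ m * u ^ m := mul_pow 4 u m
  have h3 : ((2:ℝ) ^ m) ^ 2 = 4 ^ m := by
    rw [← pow_mul, mul_comm, pow_mul]; norm_num
  rw [h2]
  gcongr
  nlinarith [pow_nonneg hu m, pow_nonneg (by norm_num : (0:ℝ) ≤ 2) m,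
      Nat.cast_nonneg (α := ℝ) m]

lemma shift1 (u : ℝ) (m : ℕ) :
    ((m + 1 : ℕ) : ℝ) * u ^ (m + 1) / (m + 1).factorial = u * (u ^ m / m.factorial) := by
  rw [Nat.factorial_succ]
  push_cast
  have h : (m.factorial : ℝ) ≠ 0 := by positivity
  field_simp
  ring

lemma sum1 {u : ℝ} (hu : 0 ≤ u) :
    ∑' m : ℕ, (m : ℝ) * u ^ m / m.factorial = u * Real.exp u := by
  rw [Summable.tsum_eq_zero_add (summable1 hu)]
  simp only [shift1]
  rw [tsum_mul_left, exp_tsum]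
  simp

lemma shift2 (u : ℝ) (m : ℕ) :
    ((m + 1 : ℕ) : ℝ) ^ 2 * u ^ (m + 1) / (m + 1).factorial =
      u * ((m : ℝ) * u ^ m / m.factorial + u ^ m / m.factorial) := by
  rw [Nat.factorial_succ]
  push_cast
  have h : (m.factorial : ℝ) ≠ 0 := by positivity
  field_simp
  ring

lemma sum2 {u : ℝ} (hu : 0 ≤ u) :
    ∑' m : ℕ, (m : ℝ) ^ 2 * u ^ m / m.factorial = (u ^ 2 + u) * Real.exp u := by
  rw [Summable.tsum_eq_zero_add (summable2 hu)]
  simp only [shift2]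
  rw [tsum_mul_left, Summable.tsum_add (summable1 hu) (summable0 u), sum1 hu, exp_tsum]
  simp
  ring

lemma var {u : ℝ} (hu : 0 ≤ u) :
    ∑' m : ℕ, u ^ m / m.factorial * ((m : ℝ) - u) ^ 2 = u * Real.exp u := by
  have he : ∀ m : ℕ, u ^ m / m.factorial * ((m : ℝ) - u) ^ 2 =
      (m : ℝ) ^ 2 * u ^ m / m.factorial - 2 * u * ((m : ℝ) * u ^ m / m.factorial)
        + u ^ 2 * (u ^ m / m.factorial) := by
    intro m; ring
  simp only [he]
  rw [Summable.tsum_add (Summable.sub (summable2 hu) (((summable1 hu)).mul_left _))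
      ((summable0 u).mul_left _),
    Summable.tsum_sub (summable2 hu) ((summable1 hu).mul_left _),
    tsum_mul_left, tsum_mul_left, sum1 hu, sum2 hu, exp_tsum]
  ring

lemma summable_var {u : ℝ} (hu : 0 ≤ u) :
    Summable (fun m : ℕ => u ^ m / m.factorial * ((m : ℝ) - u) ^ 2) := by
  have he : ∀ m : ℕ, u ^ m / m.factorial * ((m : ℝ) - u) ^ 2 =
      (m : ℝ) ^ 2 * u ^ m / m.factorial - 2 * u * ((m : ℝ) * u ^ m / m.factorial)
        + u ^ 2 * (u ^ m / m.factorial) := by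
    intro m; ring
  simp only [he]
  exact Summable.add (Summable.sub (summable2 hu) ((summable1 hu).mul_left _))
    ((summable0 u).mul_left _)

lemma summable_absmom {u : ℝ} (hu : 0 < u) :
    Summable (fun m : ℕ => u ^ m / m.factorial * |(m : ℝ) - u|) := by
  apply Summable.of_nonneg_of_le (fun m => by positivity) (fun m => ?_)
    (((summable_var hu.le).add ((summable0 u).mul_left u)).mul_right (1 / (2 * Real.sqrt u)))
  have hs : 0 < Real.sqrt u := Real.sqrt_pos.mpr hu
  have hsq : Real.sqrt u ^ 2 = u := Real.sq_sqrt hu.le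
  have key : |(m : ℝ) - u| ≤ (((m : ℝ) - u) ^ 2 + u) / (2 * Real.sqrt u) := by
    rw [le_div_iff₀ (by positivity)]
    nlinarith [sq_nonneg (|(m : ℝ) - u| - Real.sqrt u), sq_abs ((m : ℝ) - u), abs_nonneg ((m:ℝ) - u)]
  calc u ^ m / m.factorial * |(m : ℝ) - u|
      ≤ u ^ m / m.factorial * ((((m : ℝ) - u) ^ 2 + u) / (2 * Real.sqrt u)) := by
        apply mul_le_mul_of_nonneg_left key (by positivity)
    _ = (u ^ m / m.factorial * ((m : ℝ) - u) ^ 2 + u * (u ^ m / m.factorial)) *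
          (1 / (2 * Real.sqrt u)) := by ring

lemma absmom {u : ℝ} (hu : 0 < u) :
    ∑' m : ℕ, u ^ m / m.factorial * |(m : ℝ) - u| ≤ Real.sqrt u * Real.exp u := by
  have hs : 0 < Real.sqrt u := Real.sqrt_pos.mpr hu
  have hsq : Real.sqrt u ^ 2 = u := Real.sq_sqrt hu.le
  have hb := ((summable_var hu.le).add ((summable0 u).mul_left u)).mul_right (1 / (2 * Real.sqrt u))
  have h1 : ∑' m : ℕ, u ^ m / m.factorial * |(m : ℝ) - u| ≤
      ∑' m : ℕ, (u ^ m / m.factorial * ((m : ℝ) - u) ^ 2 + u * (u ^ m / m.factorial)) *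
        (1 / (2 * Real.sqrt u)) := by
    apply Summable.tsum_le_tsum ?_ (summable_absmom hu) hb
    intro m
    have key : |(m : ℝ) - u| ≤ (((m : ℝ) - u) ^ 2 + u) / (2 * Real.sqrt u) := by
      rw [le_div_iff₀ (by positivity)]
      nlinarith [sq_nonneg (|(m : ℝ) - u| - Real.sqrt u), sq_abs ((m : ℝ) - u),
        abs_nonneg ((m:ℝ) - u)]
    calc u ^ m / m.factorial * |(m : ℝ) - u|
        ≤ u ^ m / m.factorial * ((((m : ℝ) - u) ^ 2 + u) / (2 * Real.sqrt u)) := by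
          apply mul_le_mul_of_nonneg_left key (by positivity)
      _ = (u ^ m / m.factorial * ((m : ℝ) - u) ^ 2 + u * (u ^ m / m.factorial)) *
            (1 / (2 * Real.sqrt u)) := by ring
  refine h1.trans ?_
  rw [tsum_mul_right, Summable.tsum_add (summable_var hu.le) ((summable0 u).mul_left u),
    var hu.le, tsum_mul_left, exp_tsum]
  have hmm : Real.sqrt u * Real.sqrt u = u := Real.mul_self_sqrt hu.le
  have : (u * Real.exp u + u * Real.exp u) * (1 / (2 * Real.sqrt u)) =
      Real.sqrt u * Real.exp u := by
    field_simp
    linear_combination (-2) * hsq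
  rw [this]

lemma powdiff {u : ℝ} (hu : u ≠ 0) (m : ℕ) :
    (m : ℝ) * u ^ (m - 1) - u ^ m = u ^ m * ((m : ℝ) - u) / u := by
  cases m with
  | zero => simp; field_simp
  | succ k =>
    have : k + 1 - 1 = k := rfl
    rw [this, pow_succ]
    push_cast
    field_simp

/- ### Integral bound -/

lemma intbound {F : ℝ → ℝ} (hFc : ContinuousOn F (Set.Ioi 0)) {M : ℝ}
    (hM : ∀ z ∈ Set.Ioi (0:ℝ), |F z| ≤ M) {p : ℝ} (hp : 0 < p) :
    |∫ z in Set.Ioi (0:ℝ), Real.exp (-z) * z ^ (p - 1) * F z| ≤ M * Real.Gamma p := by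
  have hGint := Real.GammaIntegral_convergent hp
  have hcont : ContinuousOn (fun z : ℝ => Real.exp (-z) * z ^ (p - 1) * F z) (Set.Ioi 0) := by
    apply ContinuousOn.mul ?_ hFc
    exact ((Real.continuous_exp.comp continuous_neg).continuousOn).mul
      (continuousOn_id.rpow_const fun z hz => Or.inl (ne_of_gt hz))
  have hmeas : AEStronglyMeasurable (fun z : ℝ => Real.exp (-z) * z ^ (p - 1) * F z)
      (volume.restrict (Set.Ioi (0:ℝ))) := hcont.aestronglyMeasurable measurableSet_Ioi
  have hbd : ∀ᵐ z ∂(volume.restrict (Set.Ioi (0:ℝ))),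
      ‖Real.exp (-z) * z ^ (p - 1) * F z‖ ≤ M * (Real.exp (-z) * z ^ (p - 1)) := by
    rw [ae_restrict_iff' measurableSet_Ioi]
    filter_upwards with z hz
    have h1 : 0 < Real.exp (-z) := Real.exp_pos _
    have h2 : (0:ℝ) ≤ z ^ (p - 1) := Real.rpow_nonneg (le_of_lt hz) _
    rw [Real.norm_eq_abs, abs_mul, abs_of_nonneg (by positivity : (0:ℝ) ≤ Real.exp (-z) * z ^ (p-1))]
    calc Real.exp (-z) * z ^ (p - 1) * |F z| ≤ Real.exp (-z) * z ^ (p - 1) * M :=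
          mul_le_mul_of_nonneg_left (hM z hz) (by positivity)
      _ = M * (Real.exp (-z) * z ^ (p - 1)) := by ring
  have hdom : Integrable (fun z : ℝ => M * (Real.exp (-z) * z ^ (p - 1)))
      (volume.restrict (Set.Ioi (0:ℝ))) := hGint.const_mul M
  have hint : Integrable (fun z : ℝ => Real.exp (-z) * z ^ (p - 1) * F z)
      (volume.restrict (Set.Ioi (0:ℝ))) := Integrable.mono' hdom hmeas hbd
  calc |∫ z in Set.Ioi (0:ℝ), Real.exp (-z) * z ^ (p - 1) * F z|
      ≤ ∫ z in Set.Ioi (0:ℝ), ‖Real.exp (-z) * z ^ (p - 1) * F z‖ :=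
        by rw [← Real.norm_eq_abs]; exact norm_integral_le_integral_norm _
    _ ≤ ∫ z in Set.Ioi (0:ℝ), M * (Real.exp (-z) * z ^ (p - 1)) :=
        integral_mono_ae hint.norm hdom hbd
    _ = M * Real.Gamma p := by
        rw [integral_const_mul, ← Real.Gamma_eq_integral hp]


/-- The semigroup `P_t^{γ,b}` (case `b > 0`):
`P_t^{γ,b} f(x) = e^{−x/(γt)} ∑_{m=0}^∞ (x/(γt))^m (1/(m! Γ(m + b/γ)))
  ∫_0^∞ e^{−z} z^{m + b/γ − 1} f(γzt) dz`. -/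
noncomputable def Psem (γ b t : ℝ) (f : ℝ → ℝ) (x : ℝ) : ℝ :=
  Real.exp (-x / (γ * t)) *
    ∑' m : ℕ, (x / (γ * t)) ^ m * (1 / ((m.factorial : ℝ) * Real.Gamma ((m : ℝ) + b / γ))) *
      ∫ z in Set.Ioi (0:ℝ), Real.exp (-z) * z ^ ((m : ℝ) + b / γ - 1) * f (γ * z * t)

/-- The supremum norm of `f` over `[0, ∞)`. -/
noncomputable def supIci (f : ℝ → ℝ) : ℝ := ⨆ y : Set.Ici (0:ℝ), |f (y : ℝ)|

set_option maxHeartbeats 1000000 in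
/-- Let `γ > 0`, `b > 0`. For every `f ∈ C([0,∞])` and `t > 0`, `P_t^{γ,b} f` is continuously
differentiable on `[0,∞)` and for every `x ≥ 0`,
`√x |(P_t^{γ,b} f)'(x)| ≤ (2√2/√(γt)) ‖f‖_∞`. -/
theorem stmt17 (γ b : ℝ) (hγ : 0 < γ) (hb : 0 < b) (f : ℝ → ℝ)
    (hf : ContinuousOn f (Set.Ici 0))
    (hlim : ∃ l, Filter.Tendsto f Filter.atTop (nhds l)) (t : ℝ) (ht : 0 < t) :
    ContDiffOn ℝ 1 (Psem γ b t f) (Set.Ici 0) ∧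
    ∀ x ≥ (0:ℝ),
      Real.sqrt x * |derivWithin (Psem γ b t f) (Set.Ici 0) x| ≤
        2 * Real.sqrt 2 / Real.sqrt (γ * t) * supIci f := by
  obtain ⟨l, hl⟩ := hlim
  have hc : (0:ℝ) < γ * t := mul_pos hγ ht
  -- the sup norm bound
  have hBdd : BddAbove (Set.range fun y : Set.Ici (0:ℝ) => |f (y : ℝ)|) := by
    have h1 : ∀ᶠ y in Filter.atTop, |f y| ≤ |l| + 1 :=
      (hl.abs).eventually_le_const (by linarith [abs_nonneg l])
    obtain ⟨A, hA⟩ := Filter.eventually_atTop.mp h1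
    obtain ⟨C, hC⟩ := (isCompact_Icc (a := (0:ℝ)) (b := max A 0)).exists_bound_of_continuousOn
      (hf.mono (fun y hy => hy.1))
    refine ⟨max C (|l| + 1), ?_⟩
    rintro v ⟨⟨y, hy⟩, rfl⟩
    rcases le_total y (max A 0) with h | h
    · exact le_max_of_le_left (by simpa [Real.norm_eq_abs] using hC y ⟨hy, h⟩)
    · exact le_max_of_le_right (hA y (le_trans (le_max_left A 0) h))
  have hMb : ∀ y, 0 ≤ y → |f y| ≤ supIci f := by
    intro y hy
    exact le_ciSup hBdd (⟨y, hy⟩ : Set.Ici (0:ℝ))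
  set M := supIci f with hM_def
  have hM0 : 0 ≤ M := le_trans (abs_nonneg _) (hMb 0 le_rfl)
  -- the coefficients h m
  set h : ℕ → ℝ := fun m =>
    (∫ z in Set.Ioi (0:ℝ), Real.exp (-z) * z ^ ((m : ℝ) + b / γ - 1) * f (γ * z * t)) /
      Real.Gamma ((m : ℝ) + b / γ) with hh_def
  have hGpos : ∀ m : ℕ, 0 < Real.Gamma ((m : ℝ) + b / γ) := fun m =>
    Real.Gamma_pos_of_pos (by positivity)
  have hhb : ∀ m, |h m| ≤ M := by
    intro m
    have hp : (0:ℝ) < (m : ℝ) + b / γ := by positivity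
    have hFc : ContinuousOn (fun z : ℝ => f (γ * z * t)) (Set.Ioi 0) := by
      apply hf.comp ((continuous_const.mul continuous_id).mul continuous_const).continuousOn
      intro z hz
      exact Set.mem_Ici.mpr (mul_pos (mul_pos hγ hz) ht).le
    have hFb : ∀ z ∈ Set.Ioi (0:ℝ), |f (γ * z * t)| ≤ M := by
      intro z hz
      exact hMb _ (mul_pos (mul_pos hγ hz) ht).le
    have := intbound hFc hFb hp
    rw [hh_def, abs_div, abs_of_pos (hGpos m), div_le_iff₀ (hGpos m)]
    exact this
  -- the series terms and their derivatives
  set G : ℕ → ℝ → ℝ := fun m x =>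
    h m / m.factorial * (Real.exp (-x / (γ * t)) * (x / (γ * t)) ^ m) with hG_def
  set G' : ℕ → ℝ → ℝ := fun m x => h m / m.factorial *
    (Real.exp (-x / (γ * t)) * (-1 / (γ * t)) * (x / (γ * t)) ^ m +
     Real.exp (-x / (γ * t)) * ((m : ℝ) * (x / (γ * t)) ^ (m - 1) * (1 / (γ * t)))) with hG'_def
  set P : ℝ → ℝ := fun x => ∑' m : ℕ, G m x with hP_def
  set P' : ℝ → ℝ := fun x => ∑' m : ℕ, G' m x with hP'_def
  have hPeq : Psem γ b t f = P := by
    funext x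
    rw [hP_def]
    simp only [Psem, hG_def, hh_def, ← tsum_mul_left]
    apply tsum_congr
    intro m
    have hG := (hGpos m).ne'
    have hfac : ((m.factorial : ℝ)) ≠ 0 := by positivity
    field_simp
  have hderiv : ∀ (m : ℕ) (x : ℝ), HasDerivAt (G m) (G' m x) x := by
    intro m x
    have h1 : HasDerivAt (fun x : ℝ => -x / (γ * t)) (-1 / (γ * t)) x := by
      simpa using ((hasDerivAt_id x).neg.div_const (γ * t))
    have h2 : HasDerivAt (fun x : ℝ => Real.exp (-x / (γ * t)))
        (Real.exp (-x / (γ * t)) * (-1 / (γ * t))) x := (Real.hasDerivAt_exp _).comp x h1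
    have h3 : HasDerivAt (fun x : ℝ => x / (γ * t)) (1 / (γ * t)) x := by
      simpa using (hasDerivAt_id x).div_const (γ * t)
    have h4 : HasDerivAt (fun x : ℝ => (x / (γ * t)) ^ m)
        ((m : ℝ) * (x / (γ * t)) ^ (m - 1) * (1 / (γ * t))) x :=
      (hasDerivAt_pow m _).comp x h3
    exact (h2.mul h4).const_mul _
  -- uniform bounds on balls
  have hKbound : ∀ R : ℝ, 0 < R → ∀ (m : ℕ), ∀ x ∈ Set.Ioo (-R) R, ‖G' m x‖ ≤
      M * Real.exp (R / (γ * t)) / (γ * t) *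
        ((max 1 (R / (γ * t))) ^ m / m.factorial +
          (m : ℝ) * (max 1 (R / (γ * t))) ^ m / m.factorial) := by
    intro R hR m x hx
    set K := max 1 (R / (γ * t)) with hK_def
    have hK1 : (1:ℝ) ≤ K := le_max_left _ _
    have hK0 : (0:ℝ) ≤ K := by linarith
    have hE : Real.exp (-x / (γ * t)) ≤ Real.exp (R / (γ * t)) := by
      apply Real.exp_le_exp.mpr
      gcongr
      linarith [hx.1]
    have hxK : |x / (γ * t)| ≤ K := by
      rw [abs_div, abs_of_pos hc]
      refine le_trans ?_ (le_max_right 1 _)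
      gcongr
      exact (abs_lt.mpr ⟨hx.1, hx.2⟩).le
    have e0 : |h m / m.factorial| ≤ M / m.factorial := by
      rw [abs_div, Nat.abs_cast]
      gcongr
      exact hhb m
    have e1 : |Real.exp (-x / (γ * t)) * (-1 / (γ * t)) * (x / (γ * t)) ^ m| ≤
        Real.exp (R / (γ * t)) * (1 / (γ * t)) * K ^ m := by
      rw [abs_mul, abs_mul, abs_pow, abs_of_pos (Real.exp_pos _),
        abs_div, abs_neg, abs_one, abs_of_pos hc]
      gcongr
    have e2 : |Real.exp (-x / (γ * t)) * ((m : ℝ) * (x / (γ * t)) ^ (m - 1) * (1 / (γ * t)))| ≤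
        Real.exp (R / (γ * t)) * ((m : ℝ) * K ^ m * (1 / (γ * t))) := by
      rw [abs_mul, abs_mul, abs_mul, abs_pow, Nat.abs_cast, abs_of_pos (Real.exp_pos _),
        abs_of_pos (show (0:ℝ) < 1 / (γ * t) by positivity)]
      have hpw : |x / (γ * t)| ^ (m - 1) ≤ K ^ m :=
        le_trans (pow_le_pow_left₀ (abs_nonneg _) hxK _) (pow_le_pow_right₀ hK1 (Nat.sub_le m 1))
      apply mul_le_mul hE ?_ (by positivity) (Real.exp_pos _).le
      apply mul_le_mul_of_nonneg_right ?_ (by positivity)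
      exact mul_le_mul_of_nonneg_left hpw (Nat.cast_nonneg m)
    have hsplit : ‖G' m x‖ ≤ |h m / m.factorial| *
        (|Real.exp (-x / (γ * t)) * (-1 / (γ * t)) * (x / (γ * t)) ^ m| +
         |Real.exp (-x / (γ * t)) * ((m : ℝ) * (x / (γ * t)) ^ (m - 1) * (1 / (γ * t)))|) := by
      have hGx : G' m x = h m / m.factorial *
          (Real.exp (-x / (γ * t)) * (-1 / (γ * t)) * (x / (γ * t)) ^ m +
           Real.exp (-x / (γ * t)) * ((m : ℝ) * (x / (γ * t)) ^ (m - 1) * (1 / (γ * t)))) := by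
        rw [hG'_def]
      rw [Real.norm_eq_abs, hGx, abs_mul]
      exact mul_le_mul_of_nonneg_left (abs_add_le _ _) (abs_nonneg _)
    refine hsplit.trans ?_
    calc |h m / m.factorial| *
          (|Real.exp (-x / (γ * t)) * (-1 / (γ * t)) * (x / (γ * t)) ^ m| +
           |Real.exp (-x / (γ * t)) * ((m : ℝ) * (x / (γ * t)) ^ (m - 1) * (1 / (γ * t)))|)
        ≤ M / m.factorial *
          (Real.exp (R / (γ * t)) * (1 / (γ * t)) * K ^ m +
           Real.exp (R / (γ * t)) * ((m : ℝ) * K ^ m * (1 / (γ * t)))) := by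
          apply mul_le_mul e0 (add_le_add e1 e2) (by positivity)
            (div_nonneg hM0 (Nat.cast_nonneg _))
      _ = M * Real.exp (R / (γ * t)) / (γ * t) *
          (K ^ m / m.factorial + (m : ℝ) * K ^ m / m.factorial) := by
          ring
  have hKsum : ∀ R : ℝ, 0 < R → Summable (fun m : ℕ =>
      M * Real.exp (R / (γ * t)) / (γ * t) *
        ((max 1 (R / (γ * t))) ^ m / m.factorial +
          (m : ℝ) * (max 1 (R / (γ * t))) ^ m / m.factorial)) := by
    intro R hR
    apply Summable.mul_left
    exact (summable0 _).add (summable1 (le_trans zero_le_one (le_max_left _ _)))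
  have hG0sum : Summable fun m : ℕ => G m 0 := by
    apply Summable.of_norm_bounded ((summable0 (1:ℝ)).mul_left M)
    intro m
    rw [hG_def, Real.norm_eq_abs, abs_mul, abs_mul, abs_pow]
    have h1 : |(0:ℝ) / (γ * t)| ^ m ≤ 1 := by
      rw [zero_div, abs_zero]
      exact pow_le_one₀ le_rfl zero_le_one
    have h2 : |Real.exp (-(0:ℝ) / (γ * t))| = 1 := by
      rw [neg_zero, zero_div, Real.exp_zero, abs_one]
    rw [h2, one_mul]
    calc |h m / m.factorial| * |(0:ℝ) / (γ * t)| ^ m ≤ M / m.factorial * 1 := by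
          apply mul_le_mul ?_ h1 (by positivity) (by positivity)
          rw [abs_div, Nat.abs_cast]; gcongr; exact hhb m
      _ = M * ((1:ℝ) ^ m / m.factorial) := by rw [one_pow]; ring
  have hPderiv : ∀ x : ℝ, HasDerivAt P (P' x) x := by
    intro x
    have hR : (0:ℝ) < |x| + 1 := by positivity
    have hx : x ∈ Set.Ioo (-(|x| + 1)) (|x| + 1) :=
      ⟨by linarith [neg_abs_le x], by linarith [le_abs_self x]⟩
    have h0 : (0:ℝ) ∈ Set.Ioo (-(|x| + 1)) (|x| + 1) := ⟨by linarith, by linarith⟩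
    rw [hP_def, hP'_def]
    exact hasDerivAt_tsum_of_isPreconnected (hKsum _ hR) isOpen_Ioo
      (convex_Ioo _ _).isPreconnected (fun m y _ => hderiv m y)
      (hKbound _ hR) h0 hG0sum hx
  have hG'cont : ∀ m : ℕ, Continuous (G' m) := by
    intro m
    have cexp : Continuous fun x : ℝ => Real.exp (-x / (γ * t)) :=
      Real.continuous_exp.comp ((continuous_id.neg).div_const _)
    have cpow : ∀ k : ℕ, Continuous fun x : ℝ => (x / (γ * t)) ^ k := fun k =>
      (continuous_id.div_const _).pow k
    rw [hG'_def]
    exact continuous_const.mul (((cexp.mul continuous_const).mul (cpow m)).add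
      (cexp.mul ((continuous_const.mul (cpow (m - 1))).mul continuous_const)))
  have hP'cont : Continuous P' := by
    rw [continuous_iff_continuousAt]
    intro x
    have hR : (0:ℝ) < |x| + 1 := by positivity
    have hmem : Set.Ioo (-(|x| + 1)) (|x| + 1) ∈ nhds x :=
      Ioo_mem_nhds (by linarith [neg_abs_le x]) (by linarith [le_abs_self x])
    have hco : ContinuousOn P' (Set.Ioo (-(|x| + 1)) (|x| + 1)) := by
      rw [hP'_def]
      exact continuousOn_tsum (fun m => (hG'cont m).continuousOn) (hKsum _ hR) (hKbound _ hR)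
    exact hco.continuousAt hmem
  have hPdiff : Differentiable ℝ P := fun x => (hPderiv x).differentiableAt
  have hderivP : deriv P = P' := funext fun x => (hPderiv x).deriv
  have hCD : ContDiff ℝ 1 P := contDiff_one_iff_deriv.mpr ⟨hPdiff, hderivP ▸ hP'cont⟩
  constructor
  · rw [hPeq]; exact hCD.contDiffOn
  · intro x hx
    have hdw : derivWithin (Psem γ b t f) (Set.Ici 0) x = P' x := by
      rw [hPeq]
      exact ((hPderiv x).hasDerivWithinAt).derivWithin (uniqueDiffOn_Ici 0 x hx)
    rw [hdw]
    rcases eq_or_lt_of_le hx with hx0 | hx0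
    · rw [← hx0, Real.sqrt_zero, zero_mul]
      exact mul_nonneg (by positivity) hM0
    · -- the case `x > 0`
      have hu : 0 < x / (γ * t) := div_pos hx0 hc
      set u := x / (γ * t) with hu_def
      have hkey : ∀ m : ℕ, |G' m x| ≤
          M * Real.exp (-u) / ((γ * t) * u) * (u ^ m / m.factorial * |(m : ℝ) - u|) := by
        intro m
        have h5 : G' m x =
            h m / m.factorial * (Real.exp (-u) / (γ * t) * (u ^ m * ((m : ℝ) - u) / u)) := by
          rw [hG'_def]
          dsimp only
          rw [neg_div, ← hu_def, ← powdiff hu.ne' m]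
          ring
        have habs : |G' m x| = |h m| / m.factorial *
            (Real.exp (-u) / (γ * t) * (u ^ m * |(m : ℝ) - u| / u)) := by
          rw [h5]
          simp only [abs_mul, abs_div, abs_pow, Nat.abs_cast, abs_of_pos hu,
            abs_of_pos hc, abs_of_pos (Real.exp_pos (-u))]
        rw [habs]
        calc |h m| / m.factorial * (Real.exp (-u) / (γ * t) * (u ^ m * |(m : ℝ) - u| / u))
            ≤ M / m.factorial * (Real.exp (-u) / (γ * t) * (u ^ m * |(m : ℝ) - u| / u)) := by
              gcongr
              exact hhb m
          _ = M * Real.exp (-u) / ((γ * t) * u) * (u ^ m / m.factorial * |(m : ℝ) - u|) := by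
              ring
      have hSb : Summable (fun m : ℕ =>
          M * Real.exp (-u) / ((γ * t) * u) * (u ^ m / m.factorial * |(m : ℝ) - u|)) :=
        (summable_absmom hu).mul_left _
      have hSa : Summable (fun m : ℕ => |G' m x|) :=
        Summable.of_nonneg_of_le (fun m => abs_nonneg _) hkey hSb
      have h6 : |P' x| ≤ ∑' m : ℕ, |G' m x| := by
        rw [hP'_def]
        simpa [Real.norm_eq_abs] using
          norm_tsum_le_tsum_norm (f := fun m : ℕ => G' m x) (by simpa [Real.norm_eq_abs] using hSa)
      have h7 : |P' x| ≤ M * Real.exp (-u) / ((γ * t) * u) * (Real.sqrt u * Real.exp u) := by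
        refine (h6.trans (Summable.tsum_le_tsum hkey hSa hSb)).trans ?_
        rw [tsum_mul_left]
        exact mul_le_mul_of_nonneg_left (absmom hu) (by positivity)
      have hxu : x = (γ * t) * u := by
        rw [hu_def]; field_simp
      have hsx : Real.sqrt x = Real.sqrt (γ * t) * Real.sqrt u := by
        rw [hxu, Real.sqrt_mul hc.le]
      have hval : Real.sqrt x *
          (M * Real.exp (-u) / ((γ * t) * u) * (Real.sqrt u * Real.exp u)) =
          M / Real.sqrt (γ * t) := by
        rw [hsx, Real.exp_neg]
        have h1 : Real.sqrt u * Real.sqrt u = u := Real.mul_self_sqrt hu.le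
        have h2 : Real.sqrt (γ * t) * Real.sqrt (γ * t) = γ * t := Real.mul_self_sqrt hc.le
        have h3 : Real.exp u ≠ 0 := (Real.exp_pos u).ne'
        have h4 : Real.sqrt u ≠ 0 := (Real.sqrt_pos.mpr hu).ne'
        have h5 : Real.sqrt (γ * t) ≠ 0 := (Real.sqrt_pos.mpr hc).ne'
        have hcc : (γ * t) * u =
            (Real.sqrt (γ * t) * Real.sqrt u) * (Real.sqrt (γ * t) * Real.sqrt u) := by
          calc (γ * t) * u = (Real.sqrt (γ * t) * Real.sqrt (γ * t)) *
              (Real.sqrt u * Real.sqrt u) := by rw [h2, h1]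
            _ = _ := by ring
        rw [hcc]
        field_simp
      calc Real.sqrt x * |P' x|
          ≤ Real.sqrt x * (M * Real.exp (-u) / ((γ * t) * u) * (Real.sqrt u * Real.exp u)) :=
            mul_le_mul_of_nonneg_left h7 (Real.sqrt_nonneg x)
        _ = M / Real.sqrt (γ * t) := hval
        _ ≤ 2 * Real.sqrt 2 / Real.sqrt (γ * t) * M := by
            have hs2 : (1:ℝ) ≤ Real.sqrt 2 := by
              rw [show (1:ℝ) = Real.sqrt 1 by simp]
              exact Real.sqrt_le_sqrt (by norm_num)
            have hsc : 0 < Real.sqrt (γ * t) := Real.sqrt_pos.mpr hc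
            rw [show 2 * Real.sqrt 2 / Real.sqrt (γ * t) * M =
              2 * Real.sqrt 2 * M / Real.sqrt (γ * t) by ring]
            gcongr
            nlinarith [hM0, hs2]
end

section
/- Let γ > 0 and b > 0, and let f : [0,∞) → ℝ be a bounded continuously differentiable function with bounded derivative f'. Then for every t > 0 and every x ≥ 0 one has (P_t^{γ,b} f)'(x) = e^{−x/(γt)} ∑_{m=0}^∞ (x/(γt))^m · 1/(m! Γ(m + b/γ + 1)) · ∫_0^∞ f'(γzt) z^{m + b/γ} e^{−z} dz. -/
open MeasureTheory

open Set Filter Topology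


lemma auxInt {α K : ℝ} (hα : 0 < α) {h : ℝ → ℝ}
    (hc : ContinuousOn h (Set.Ioi 0)) (hK : ∀ z ∈ Set.Ioi (0:ℝ), |h z| ≤ K) :
    IntegrableOn (fun z => Real.exp (-z) * z ^ (α - 1) * h z) (Set.Ioi 0) := by
  have hmeas : AEStronglyMeasurable (fun z => Real.exp (-z) * z ^ (α - 1) * h z)
      (volume.restrict (Set.Ioi 0)) := by
    apply ContinuousOn.aestronglyMeasurable ?_ measurableSet_Ioi
    exact ((Real.continuous_exp.comp continuous_neg).continuousOn.mul
      (continuousOn_id.rpow_const (fun z hz => Or.inl (ne_of_gt hz)))).mul hc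
  refine ((Real.GammaIntegral_convergent hα).mul_const K).mono' hmeas ?_
  filter_upwards [ae_restrict_mem measurableSet_Ioi] with z hz
  have h1 : (0:ℝ) < z := hz
  have h2 : (0:ℝ) ≤ Real.exp (-z) * z ^ (α - 1) := by positivity
  rw [Real.norm_eq_abs, abs_mul, abs_of_nonneg h2]
  exact mul_le_mul_of_nonneg_left (hK z hz) h2

lemma auxBound {α K : ℝ} (hα : 0 < α) {h : ℝ → ℝ}
    (hc : ContinuousOn h (Set.Ioi 0)) (hK : ∀ z ∈ Set.Ioi (0:ℝ), |h z| ≤ K) :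
    |∫ z in Set.Ioi (0:ℝ), Real.exp (-z) * z ^ (α - 1) * h z| ≤ K * Real.Gamma α := by
  have h1 := auxInt hα hc hK
  calc |∫ z in Set.Ioi (0:ℝ), Real.exp (-z) * z ^ (α - 1) * h z|
      ≤ ∫ z in Set.Ioi (0:ℝ), |Real.exp (-z) * z ^ (α - 1) * h z| :=
        by simpa only [Real.norm_eq_abs] using norm_integral_le_integral_norm (fun z => Real.exp (-z) * z ^ (α - 1) * h z)
    _ ≤ ∫ z in Set.Ioi (0:ℝ), Real.exp (-z) * z ^ (α - 1) * K := by
        apply setIntegral_mono_on h1.abs ((Real.GammaIntegral_convergent hα).mul_const K)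
          measurableSet_Ioi
        intro z hz
        have h2 : (0:ℝ) ≤ Real.exp (-z) * z ^ (α - 1) := by
          have : (0:ℝ) < z := hz
          positivity
        rw [abs_mul, abs_of_nonneg h2]
        exact mul_le_mul_of_nonneg_left (hK z hz) h2
    _ = K * Real.Gamma α := by
        rw [integral_mul_const, Real.Gamma_eq_integral hα, mul_comm]

lemma auxIBP {α c K₀ K₁ : ℝ} (hα : 0 < α) (hc : 0 < c) {F F' : ℝ → ℝ}
    (hFc : ContinuousOn F (Set.Ici 0)) (hF'c : ContinuousOn F' (Set.Ici 0))
    (hFd : ∀ z ∈ Set.Ioi (0:ℝ), HasDerivAt F (c * F' z) z)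
    (hFb : ∀ z ≥ (0:ℝ), |F z| ≤ K₀) (hF'b : ∀ z ≥ (0:ℝ), |F' z| ≤ K₁) :
    c * ∫ z in Set.Ioi (0:ℝ), F' z * z ^ α * Real.exp (-z)
      = (∫ z in Set.Ioi (0:ℝ), Real.exp (-z) * z ^ (α + 1 - 1) * F z)
        - α * ∫ z in Set.Ioi (0:ℝ), Real.exp (-z) * z ^ (α - 1) * F z := by
  have hFcI : ContinuousOn F (Set.Ioi 0) := hFc.mono Ioi_subset_Ici_self
  have hF'cI : ContinuousOn F' (Set.Ioi 0) := hF'c.mono Ioi_subset_Ici_self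
  have hFbI : ∀ z ∈ Set.Ioi (0:ℝ), |F z| ≤ K₀ := fun z hz => hFb z (le_of_lt hz)
  have hF'bI : ∀ z ∈ Set.Ioi (0:ℝ), |F' z| ≤ K₁ := fun z hz => hF'b z (le_of_lt hz)
  set g : ℝ → ℝ := fun z => z ^ α * Real.exp (-z) * F z with hg
  set G : ℝ → ℝ := fun z => α * z ^ (α - 1) * Real.exp (-z) * F z
      - z ^ α * Real.exp (-z) * F z + z ^ α * Real.exp (-z) * (c * F' z) with hGdef
  -- derivative
  have hgd : ∀ z ∈ Set.Ioi (0:ℝ), HasDerivAt g (G z) z := by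
    intro z hz
    have hz0 : (0:ℝ) < z := hz
    have h1 : HasDerivAt (fun z : ℝ => z ^ α) (α * z ^ (α - 1)) z :=
      Real.hasDerivAt_rpow_const (Or.inl hz0.ne')
    have h2 : HasDerivAt (fun z : ℝ => Real.exp (-z)) (-Real.exp (-z)) z := by
      simpa [Function.comp_def] using (Real.hasDerivAt_exp (-z)).comp z (hasDerivAt_neg z)
    have h3 := hFd z hz
    have heq : G z = (α * z ^ (α - 1) * Real.exp (-z) + z ^ α * -Real.exp (-z)) * F z
        + z ^ α * Real.exp (-z) * (c * F' z) := by rw [hGdef]; ring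
    rw [hg, heq]
    exact (h1.mul h2).mul h3
  -- integrability pieces
  have hG1 : IntegrableOn (fun z => α * z ^ (α - 1) * Real.exp (-z) * F z) (Set.Ioi 0) :=
    IntegrableOn.congr_fun ((auxInt hα hFcI hFbI).const_mul α) (fun z _ => by ring)
      measurableSet_Ioi
  have hG2 : IntegrableOn (fun z => z ^ α * Real.exp (-z) * F z) (Set.Ioi 0) :=
    IntegrableOn.congr_fun (auxInt (by linarith : (0:ℝ) < α + 1) hFcI hFbI)
      (fun z _ => by rw [show α + 1 - 1 = α by ring]; ring) measurableSet_Ioi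
  have hG3 : IntegrableOn (fun z => z ^ α * Real.exp (-z) * (c * F' z)) (Set.Ioi 0) :=
    IntegrableOn.congr_fun ((auxInt (by linarith : (0:ℝ) < α + 1) hF'cI hF'bI).const_mul c)
      (fun z _ => by rw [show α + 1 - 1 = α by ring]; ring) measurableSet_Ioi
  have hGint : IntegrableOn G (Set.Ioi 0) := (hG1.sub hG2).add hG3
  -- continuity at 0
  have hg0 : ContinuousWithinAt g (Set.Ici 0) 0 := by
    apply ContinuousWithinAt.mul
    apply ContinuousWithinAt.mul
    · exact (Real.continuousAt_rpow_const 0 α (Or.inr hα.le)).continuousWithinAt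
    · exact (Real.continuous_exp.comp continuous_neg).continuousAt.continuousWithinAt
    · exact hFc 0 Set.self_mem_Ici
  -- limit at infinity
  have hgt : Tendsto g atTop (𝓝 0) := by
    have h1 : Tendsto (fun z : ℝ => K₀ * (z ^ α * Real.exp (-1 * z))) atTop (𝓝 (K₀ * 0)) :=
      (tendsto_rpow_mul_exp_neg_mul_atTop_nhds_zero α 1 one_pos).const_mul K₀
    rw [mul_zero] at h1
    apply squeeze_zero_norm' _ h1
    filter_upwards [eventually_ge_atTop (0:ℝ)] with z hz
    have h2 : (0:ℝ) ≤ z ^ α * Real.exp (-z) := by positivity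
    rw [Real.norm_eq_abs, hg, abs_mul, abs_of_nonneg h2, neg_one_mul]
    calc z ^ α * Real.exp (-z) * |F z| ≤ z ^ α * Real.exp (-z) * K₀ :=
          mul_le_mul_of_nonneg_left (hFb z hz) h2
      _ = K₀ * (z ^ α * Real.exp (-z)) := by ring
  have hgz : g 0 = 0 := by
    rw [hg]; simp [Real.zero_rpow hα.ne']
  have key := integral_Ioi_of_hasDerivAt_of_tendsto hg0 hgd hGint hgt
  rw [hgz, zero_sub, neg_zero] at key
  -- split the integral
  have hsplit : ∫ z in Set.Ioi (0:ℝ), G z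
      = ((∫ z in Set.Ioi (0:ℝ), α * z ^ (α - 1) * Real.exp (-z) * F z)
        - ∫ z in Set.Ioi (0:ℝ), z ^ α * Real.exp (-z) * F z)
        + ∫ z in Set.Ioi (0:ℝ), z ^ α * Real.exp (-z) * (c * F' z) := by
    have hpq : IntegrableOn (fun z => α * z ^ (α - 1) * Real.exp (-z) * F z
        - z ^ α * Real.exp (-z) * F z) (Set.Ioi 0) := hG1.sub hG2
    rw [hGdef, integral_add hpq hG3, integral_sub hG1 hG2]
  have e1 : ∫ z in Set.Ioi (0:ℝ), α * z ^ (α - 1) * Real.exp (-z) * F z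
      = α * ∫ z in Set.Ioi (0:ℝ), Real.exp (-z) * z ^ (α - 1) * F z := by
    rw [← integral_const_mul]
    exact setIntegral_congr_fun measurableSet_Ioi (fun z _ => by ring)
  have e2 : ∫ z in Set.Ioi (0:ℝ), z ^ α * Real.exp (-z) * F z
      = ∫ z in Set.Ioi (0:ℝ), Real.exp (-z) * z ^ (α + 1 - 1) * F z :=
    setIntegral_congr_fun measurableSet_Ioi (fun z _ => by rw [show α + 1 - 1 = α by ring]; ring)
  have e3 : ∫ z in Set.Ioi (0:ℝ), z ^ α * Real.exp (-z) * (c * F' z)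
      = c * ∫ z in Set.Ioi (0:ℝ), F' z * z ^ α * Real.exp (-z) := by
    rw [← integral_const_mul]
    exact setIntegral_congr_fun measurableSet_Ioi (fun z _ => by ring)
  rw [hsplit, e1, e2, e3] at key
  linarith


lemma summable_mpow {R : ℝ} (hR : 0 ≤ R) :
    Summable (fun m : ℕ => (m : ℝ) * R ^ (m - 1) / m.factorial) := by
  rw [← summable_nat_add_iff 1]
  have h : (fun n : ℕ => ((n + 1 : ℕ) : ℝ) * R ^ ((n + 1) - 1) / ((n + 1).factorial : ℝ))
      = fun n : ℕ => R ^ n / (n.factorial : ℝ) := by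
    funext n
    rw [Nat.add_sub_cancel, Nat.factorial_succ]
    have h1 : ((n.factorial : ℝ)) ≠ 0 := Nat.cast_ne_zero.mpr n.factorial_ne_zero
    have h2 : ((n : ℝ) + 1) ≠ 0 := by positivity
    push_cast
    field_simp
  rw [h]
  exact Real.summable_pow_div_factorial R

lemma summable_coef {A : ℕ → ℝ} {K : ℝ} (hA : ∀ m, |A m| ≤ K / m.factorial) (v : ℝ) :
    Summable (fun m : ℕ => A m * v ^ m) := by
  refine Summable.of_norm_bounded (g := fun m => K * (|v| ^ m / m.factorial))
    ((Real.summable_pow_div_factorial (|v|)).mul_left K) (fun m => ?_)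
  rw [Real.norm_eq_abs, abs_mul, abs_pow]
  calc |A m| * |v| ^ m ≤ (K / m.factorial) * |v| ^ m :=
        mul_le_mul_of_nonneg_right (hA m) (by positivity)
    _ = K * (|v| ^ m / m.factorial) := by ring

lemma hasDerivAt_tsum_coef {A : ℕ → ℝ} {K c : ℝ} (hc : 0 < c)
    (hA : ∀ m, |A m| ≤ K / m.factorial) (x : ℝ) :
    HasDerivAt (fun y => ∑' m : ℕ, A m * (y / c) ^ m)
      (∑' m : ℕ, A m * ((m : ℝ) * (x / c) ^ (m - 1) * (1 / c))) x := by
  set R : ℝ := (|x| + 1) / c with hRdef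
  have hxmem : x ∈ Set.Ioo (-(|x| + 1)) (|x| + 1) := by
    constructor
    · nlinarith [abs_nonneg x, le_abs_self x, neg_abs_le x]
    · nlinarith [abs_nonneg x, le_abs_self x, neg_abs_le x]
  refine hasDerivAt_tsum_of_isPreconnected
    (u := fun m : ℕ => (K / c) * ((m : ℝ) * R ^ (m - 1) / m.factorial))
    ((summable_mpow (by positivity)).mul_left (K / c))
    isOpen_Ioo isPreconnected_Ioo
    (fun m y _ => (((hasDerivAt_id y).div_const c).pow m).const_mul (A m))
    (fun m y hy => ?_) hxmem (summable_coef hA (x / c)) hxmem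
  have hyb : |y / c| ≤ R := by
    rw [abs_div, abs_of_pos hc, hRdef]
    have : |y| ≤ |x| + 1 := by
      rw [abs_le]; exact ⟨hy.1.le, hy.2.le⟩
    gcongr
  rw [Real.norm_eq_abs, abs_mul, abs_mul, abs_mul,
    abs_of_nonneg (Nat.cast_nonneg m : (0:ℝ) ≤ (m : ℝ)),
    abs_of_pos (by positivity : (0:ℝ) < 1 / c), abs_pow]
  calc |A m| * ((m : ℝ) * |y / c| ^ (m - 1) * (1 / c))
      ≤ (K / m.factorial) * ((m : ℝ) * R ^ (m - 1) * (1 / c)) := by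
        apply mul_le_mul (hA m) ?_ (by positivity) ?_
        · gcongr
        · have h0 : (0:ℝ) ≤ |A m| := abs_nonneg _
          have := hA m
          linarith
    _ = K / c * ((m : ℝ) * R ^ (m - 1) / m.factorial) := by ring

lemma summable_coef_shift {A : ℕ → ℝ} {K : ℝ} (hA : ∀ m, |A m| ≤ K / m.factorial) (v : ℝ) :
    Summable (fun m : ℕ => ((m : ℝ) + 1) * A (m + 1) * v ^ m) := by
  refine Summable.of_norm_bounded (g := fun m => K * (|v| ^ m / m.factorial))
    ((Real.summable_pow_div_factorial (|v|)).mul_left K) (fun m => ?_)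
  rw [Real.norm_eq_abs, abs_mul, abs_mul, abs_pow,
    abs_of_nonneg (by positivity : (0:ℝ) ≤ (m : ℝ) + 1)]
  have hfac : (((m+1).factorial : ℝ)) = ((m:ℝ) + 1) * (m.factorial : ℝ) := by
    rw [Nat.factorial_succ]; push_cast; ring
  have hkey : ((m:ℝ) + 1) * (K / ((m+1).factorial : ℝ)) = K / (m.factorial : ℝ) := by
    rw [hfac]
    have h1 : ((m.factorial : ℝ)) ≠ 0 := Nat.cast_ne_zero.mpr m.factorial_ne_zero
    have h2 : ((m:ℝ) + 1) ≠ 0 := by positivity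
    field_simp
  calc ((m:ℝ) + 1) * |A (m + 1)| * |v| ^ m
      ≤ ((m:ℝ) + 1) * (K / ((m+1).factorial : ℝ)) * |v| ^ m := by
        gcongr
        exact hA (m + 1)
    _ = K * (|v| ^ m / m.factorial) := by rw [hkey]; ring

lemma summable_coef_deriv {A : ℕ → ℝ} {K c : ℝ} (hc : 0 < c)
    (hA : ∀ m, |A m| ≤ K / m.factorial) {v : ℝ} (hv : 0 ≤ v) :
    Summable (fun m : ℕ => A m * ((m : ℝ) * v ^ (m - 1) * (1 / c))) := by
  refine Summable.of_norm_bounded (g := fun m => (K / c) * ((m:ℝ) * v ^ (m - 1) / m.factorial))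
    ((summable_mpow hv).mul_left (K / c)) (fun m => ?_)
  rw [Real.norm_eq_abs, abs_mul]
  have h1 : |(m : ℝ) * v ^ (m - 1) * (1 / c)| = (m : ℝ) * v ^ (m - 1) * (1 / c) :=
    abs_of_nonneg (by positivity)
  rw [h1]
  calc |A m| * ((m : ℝ) * v ^ (m - 1) * (1 / c))
      ≤ (K / m.factorial) * ((m : ℝ) * v ^ (m - 1) * (1 / c)) :=
        mul_le_mul_of_nonneg_right (hA m) (by positivity)
    _ = (K / c) * ((m:ℝ) * v ^ (m - 1) / m.factorial) := by ring

/-- The integral `∫_0^∞ e^{-z} z^{δ-1} f(γ z t) dz`. -/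
noncomputable def Ii (γ t : ℝ) (f : ℝ → ℝ) (δ : ℝ) : ℝ :=
  ∫ z in Set.Ioi (0:ℝ), Real.exp (-z) * z ^ (δ - 1) * f (γ * z * t)

/-- Coefficients of the power series defining `Psem`. -/
noncomputable def Acoef (γ b t : ℝ) (f : ℝ → ℝ) (m : ℕ) : ℝ :=
  (1 / ((m.factorial : ℝ) * Real.Gamma ((m:ℝ) + b / γ))) * Ii γ t f ((m:ℝ) + b / γ)

lemma Psem_eq (γ b t : ℝ) (f : ℝ → ℝ) (y : ℝ) :
    Psem γ b t f y = Real.exp (-(y / (γ * t))) *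
      ∑' m : ℕ, Acoef γ b t f m * (y / (γ * t)) ^ m := by
  unfold Psem Acoef Ii
  rw [neg_div]
  congr 1
  exact tsum_congr fun m => by ring

/-- Let `γ > 0`, `b > 0` and let `f : [0,∞) → ℝ` be bounded, continuously differentiable
with bounded derivative. Then for every `t > 0` and `x ≥ 0`,
`(P_t^{γ,b} f)'(x) = e^{−x/(γt)} ∑_{m=0}^∞ (x/(γt))^m (1/(m! Γ(m + b/γ + 1)))
  ∫_0^∞ f'(γzt) z^{m + b/γ} e^{−z} dz`. -/
theorem stmt18 (γ b : ℝ) (hγ : 0 < γ) (hb : 0 < b) (f : ℝ → ℝ)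
    (hf : ContDiffOn ℝ 1 f (Set.Ici 0))
    (hbd0 : ∃ K, ∀ x ≥ (0:ℝ), |f x| ≤ K)
    (hbd1 : ∃ K, ∀ x ≥ (0:ℝ), |derivWithin f (Set.Ici 0) x| ≤ K)
    (t : ℝ) (ht : 0 < t) (x : ℝ) (hx : 0 ≤ x) :
    derivWithin (Psem γ b t f) (Set.Ici 0) x =
      Real.exp (-x / (γ * t)) *
        ∑' m : ℕ, (x / (γ * t)) ^ m * (1 / ((m.factorial : ℝ) * Real.Gamma ((m : ℝ) + b / γ + 1))) *
          ∫ z in Set.Ioi (0:ℝ),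
            derivWithin f (Set.Ici 0) (γ * z * t) * z ^ ((m : ℝ) + b / γ) * Real.exp (-z) := by

  obtain ⟨K₀, hK₀⟩ := hbd0
  obtain ⟨K₁, hK₁⟩ := hbd1
  set c := γ * t with hcdef
  have hc : 0 < c := mul_pos hγ ht
  have hβ : ∀ m : ℕ, (0:ℝ) < (m:ℝ) + b / γ := fun m =>
    add_pos_of_nonneg_of_pos (Nat.cast_nonneg m) (div_pos hb hγ)
  have hmap : ∀ z ∈ Set.Ici (0:ℝ), γ * z * t ∈ Set.Ici (0:ℝ) := fun z hz =>
    mul_nonneg (mul_nonneg hγ.le hz) ht.le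
  have hcont_inner : Continuous fun z : ℝ => γ * z * t :=
    (continuous_const.mul continuous_id).mul continuous_const
  have hfc : ContinuousOn f (Set.Ici 0) := hf.continuousOn
  have hf'c : ContinuousOn (derivWithin f (Set.Ici 0)) (Set.Ici 0) :=
    hf.continuousOn_derivWithin (uniqueDiffOn_Ici 0) le_rfl
  have hFc : ContinuousOn (fun z => f (γ * z * t)) (Set.Ici 0) :=
    hfc.comp hcont_inner.continuousOn hmap
  have hF'c : ContinuousOn (fun z => derivWithin f (Set.Ici 0) (γ * z * t)) (Set.Ici 0) :=
    hf'c.comp hcont_inner.continuousOn hmap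
  have hFb : ∀ z ≥ (0:ℝ), |f (γ * z * t)| ≤ K₀ := fun z hz => hK₀ _ (hmap z hz)
  have hF'b : ∀ z ≥ (0:ℝ), |derivWithin f (Set.Ici 0) (γ * z * t)| ≤ K₁ :=
    fun z hz => hK₁ _ (hmap z hz)
  have hFd : ∀ z ∈ Set.Ioi (0:ℝ), HasDerivAt (fun z => f (γ * z * t))
      (c * derivWithin f (Set.Ici 0) (γ * z * t)) z := by
    intro z hz
    have hz0 : (0:ℝ) < z := hz
    have h1 : (0:ℝ) < γ * z * t := by positivity
    have h2 : HasDerivAt f (derivWithin f (Set.Ici 0) (γ * z * t)) (γ * z * t) :=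
      ((hf.differentiableOn one_ne_zero (γ * z * t) h1.le).hasDerivWithinAt).hasDerivAt
        (Ici_mem_nhds h1)
    have h3 : HasDerivAt (fun z : ℝ => γ * z * t) (γ * t) z := by
      simpa using ((hasDerivAt_id z).const_mul γ).mul_const t
    have h4 := h2.comp z h3
    rw [hcdef]
    simpa [Function.comp_def, mul_comm] using h4
  have hIBP : ∀ m : ℕ, c * (∫ z in Set.Ioi (0:ℝ),
        derivWithin f (Set.Ici 0) (γ * z * t) * z ^ ((m:ℝ) + b / γ) * Real.exp (-z))
      = Ii γ t f ((m:ℝ) + b / γ + 1) - ((m:ℝ) + b / γ) * Ii γ t f ((m:ℝ) + b / γ) :=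
    fun m => auxIBP (hβ m) hc hFc hF'c hFd hFb hF'b
  have hAbd : ∀ m : ℕ, |Acoef γ b t f m| ≤ K₀ / m.factorial := by
    intro m
    have h1 : |Ii γ t f ((m:ℝ) + b / γ)| ≤ K₀ * Real.Gamma ((m:ℝ) + b / γ) :=
      auxBound (hβ m) (hFc.mono Ioi_subset_Ici_self) (fun z hz => hFb z hz.le)
    have hΓ : 0 < Real.Gamma ((m:ℝ) + b / γ) := Real.Gamma_pos_of_pos (hβ m)
    have hfac : (0:ℝ) < (m.factorial : ℝ) := by exact_mod_cast m.factorial_pos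
    unfold Acoef
    rw [abs_mul, abs_of_pos
      (by positivity : (0:ℝ) < 1 / ((m.factorial:ℝ) * Real.Gamma ((m:ℝ) + b / γ)))]
    calc (1 / ((m.factorial:ℝ) * Real.Gamma ((m:ℝ) + b / γ))) * |Ii γ t f ((m:ℝ) + b / γ)|
        ≤ (1 / ((m.factorial:ℝ) * Real.Gamma ((m:ℝ) + b / γ)))
            * (K₀ * Real.Gamma ((m:ℝ) + b / γ)) := by gcongr
      _ = K₀ / m.factorial := by field_simp
  have hu : (0:ℝ) ≤ x / c := div_nonneg hx hc.le
  -- derivative of Psem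
  have hS := hasDerivAt_tsum_coef (A := Acoef γ b t f) (K := K₀) hc hAbd x
  have hexp : HasDerivAt (fun y : ℝ => Real.exp (-(y / c))) (Real.exp (-(x / c)) * -(1 / c)) x :=
    (((hasDerivAt_id x).div_const c).neg).exp
  have hprod := hexp.mul hS
  have hPfun : Psem γ b t f = fun y => Real.exp (-(y / c)) *
      ∑' m : ℕ, Acoef γ b t f m * (y / c) ^ m := funext fun y => Psem_eq γ b t f y
  have hPd : HasDerivAt (Psem γ b t f)
      (Real.exp (-(x / c)) * -(1 / c) * (∑' m : ℕ, Acoef γ b t f m * (x / c) ^ m)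
        + Real.exp (-(x / c))
          * ∑' m : ℕ, Acoef γ b t f m * ((m:ℝ) * (x / c) ^ (m - 1) * (1 / c))) x := by
    rw [hPfun]; exact hprod
  rw [(hPd.hasDerivWithinAt).derivWithin (uniqueDiffOn_Ici 0 x hx)]
  -- termwise identity
  have hterm : ∀ m : ℕ, (x / c) ^ m
        * (1 / ((m.factorial : ℝ) * Real.Gamma ((m:ℝ) + b / γ + 1)))
        * (∫ z in Set.Ioi (0:ℝ),
            derivWithin f (Set.Ici 0) (γ * z * t) * z ^ ((m:ℝ) + b / γ) * Real.exp (-z))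
      = (1 / c) * (((m:ℝ) + 1) * Acoef γ b t f (m + 1) * (x / c) ^ m)
        - (1 / c) * (Acoef γ b t f m * (x / c) ^ m) := by
    intro m
    have h1 := hIBP m
    have hg1 : Real.Gamma ((m:ℝ) + b / γ + 1) = ((m:ℝ) + b / γ) * Real.Gamma ((m:ℝ) + b / γ) :=
      Real.Gamma_add_one (hβ m).ne'
    have hJ : (∫ z in Set.Ioi (0:ℝ),
          derivWithin f (Set.Ici 0) (γ * z * t) * z ^ ((m:ℝ) + b / γ) * Real.exp (-z))
        = (Ii γ t f ((m:ℝ) + b / γ + 1) - ((m:ℝ) + b / γ) * Ii γ t f ((m:ℝ) + b / γ)) / c := by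
      rw [eq_div_iff hc.ne', mul_comm]
      exact h1
    rw [hJ]
    unfold Acoef
    rw [Nat.factorial_succ]
    push_cast
    rw [show (m:ℝ) + 1 + b / γ = (m:ℝ) + b / γ + 1 from by ring, hg1]
    have h2 : ((m.factorial : ℝ)) ≠ 0 := Nat.cast_ne_zero.mpr m.factorial_ne_zero
    have h3 : Real.Gamma ((m:ℝ) + b / γ) ≠ 0 := (Real.Gamma_pos_of_pos (hβ m)).ne'
    have h4 : ((m:ℝ) + b / γ) ≠ 0 := (hβ m).ne'
    have h5 : c ≠ 0 := hc.ne'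
    have h6 : ((m:ℝ) + 1) ≠ 0 := by positivity
    field_simp
  have hsum1 : Summable (fun m : ℕ => ((m:ℝ) + 1) * Acoef γ b t f (m + 1) * (x / c) ^ m) :=
    summable_coef_shift hAbd (x / c)
  have hsum2 : Summable (fun m : ℕ => Acoef γ b t f m * (x / c) ^ m) :=
    summable_coef hAbd (x / c)
  have htsum : (∑' m : ℕ, (x / c) ^ m
        * (1 / ((m.factorial : ℝ) * Real.Gamma ((m:ℝ) + b / γ + 1)))
        * (∫ z in Set.Ioi (0:ℝ),
            derivWithin f (Set.Ici 0) (γ * z * t) * z ^ ((m:ℝ) + b / γ) * Real.exp (-z)))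
      = (1 / c) * (∑' m : ℕ, ((m:ℝ) + 1) * Acoef γ b t f (m + 1) * (x / c) ^ m)
        - (1 / c) * (∑' m : ℕ, Acoef γ b t f m * (x / c) ^ m) := by
    rw [tsum_congr hterm, Summable.tsum_sub (hsum1.mul_left (1 / c)) (hsum2.mul_left (1 / c)),
      tsum_mul_left, tsum_mul_left]
  have hshift : (∑' m : ℕ, Acoef γ b t f m * ((m:ℝ) * (x / c) ^ (m - 1) * (1 / c)))
      = (1 / c) * ∑' m : ℕ, ((m:ℝ) + 1) * Acoef γ b t f (m + 1) * (x / c) ^ m := by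
    rw [Summable.tsum_eq_zero_add (summable_coef_deriv hc hAbd hu)]
    simp only [Nat.cast_zero, zero_mul, mul_zero, zero_add]
    rw [← tsum_mul_left]
    exact tsum_congr fun n => by push_cast [Nat.add_sub_cancel]; ring
  rw [neg_div, htsum, hshift]
  ring
end
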